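/- In a group-cograded weak Hopf quasigroup H over a group G, for all p ∈ G and h, g ∈ H_p: gh = (g ε_p^t(h_{(1,e)})) h_{(2,p)} = ε_p^t(g_{(1,e)})(g_{(2,p)} h) = g_{(1,p)}(ε_p^s(g_{(2,e)}) h) = (g h_{(1,p)}) ε_p^s(h_{(2,e)}). -/

import Mathlib

noncomputable section

open TensorProduct

namespace WHQPaper

variable (k : Type*) [Field k]

/-- `(a ⊗ b) ↦ f a * g b` into the scalars. -/
def sc2 {M N : Type*} [AddCommGroup M] [Module k M] [AddCommGroup N] [Module k N]
    (f : M →ₗ[k] k) (g : N →ₗ[k] k) : M ⊗[k] N →ₗ[k] k :=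
  (LinearMap.mul' k k).comp (TensorProduct.map f g)

/-- `(a ⊗ b) ↦ f a • g b`. -/
def sm2 {M N P : Type*} [AddCommGroup M] [Module k M] [AddCommGroup N] [Module k N]
    [AddCommGroup P] [Module k P] (f : M →ₗ[k] k) (g : N →ₗ[k] P) : M ⊗[k] N →ₗ[k] P :=
  TensorProduct.lift ((LinearMap.lsmul k P).compl₁₂ f g)

/-- `(a ⊗ b) ↦ m (f a) (g b)`. -/
def mu2 {M N A B C : Type*} [AddCommGroup M] [Module k M] [AddCommGroup N] [Module k N]
    [AddCommGroup A] [Module k A] [AddCommGroup B] [Module k B] [AddCommGroup C] [Module k C]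
    (m : A →ₗ[k] B →ₗ[k] C) (f : M →ₗ[k] A) (g : N →ₗ[k] B) : M ⊗[k] N →ₗ[k] C :=
  TensorProduct.lift (m.compl₁₂ f g)

/-- the bilinear map `(a ⊗ b) ↦ (c ⊗ d) ↦ (f a c) ⊗ (g b d)`. -/
def pair2 {A B C D E₁ E₂ : Type*} [AddCommGroup A] [Module k A] [AddCommGroup B] [Module k B]
    [AddCommGroup C] [Module k C] [AddCommGroup D] [Module k D]
    [AddCommGroup E₁] [Module k E₁] [AddCommGroup E₂] [Module k E₂]
    (f : A →ₗ[k] C →ₗ[k] E₁) (g : B →ₗ[k] D →ₗ[k] E₂) :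
    (A ⊗[k] B) →ₗ[k] (C ⊗[k] D) →ₗ[k] (E₁ ⊗[k] E₂) :=
  TensorProduct.lift ((TensorProduct.mapBilinear (σ₁₂ := RingHom.id k) (M := C) (N := D) (M₂ := E₁) (N₂ := E₂)).compl₁₂ f g)

variable {G : Type*} [Group G]

/-- transport along an equality of indices. -/
def castH (H : G → Type*) [∀ p, AddCommGroup (H p)] [∀ p, Module k (H p)]
    {p q : G} (e : p = q) : H p →ₗ[k] H q where
  toFun x := e ▸ x
  map_add' := by subst e; intros; rfl
  map_smul' := by subst e; intros; rfl

variable (G)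

/-- A group-cograded weak Hopf quasigroup: a family of (not necessarily associative)
unital algebras `(H_p)_{p ∈ G}`, comultiplications `Δ_{p,q} : H_{pq} → H_p ⊗ H_q` which are
coassociative algebra maps, a counit `ε : H_e → k` and an antipode
`S = (S_p : H_p → H_{p⁻¹})`, subject to the axioms of Definition 3.1, together with the
four (co)unital maps `ε^t_p, ε^s_p, ε̃^t_p, ε̃^s_p : H_e → H_p` given by their defining
formulas. -/
structure GCWHQ (H : G → Type*) [∀ p, AddCommGroup (H p)] [∀ p, Module k (H p)] where
  mul : ∀ p, H p →ₗ[k] H p →ₗ[k] H p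
  one : ∀ p, H p
  comul : ∀ p q, H (p * q) →ₗ[k] H p ⊗[k] H q
  counit : H 1 →ₗ[k] k
  antS : ∀ p, H p →ₗ[k] H p⁻¹
  εt : ∀ p, H 1 →ₗ[k] H p
  εs : ∀ p, H 1 →ₗ[k] H p
  εt' : ∀ p, H 1 →ₗ[k] H p
  εs' : ∀ p, H 1 →ₗ[k] H p
  one_mul' : ∀ p (h : H p), mul p (one p) h = h
  mul_one' : ∀ p (h : H p), mul p h (one p) = h
  /-- each `Δ_{p,q}` is multiplicative -/
  comul_mul : ∀ p q (h g : H (p * q)),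
    comul p q (mul (p * q) h g) = pair2 k (mul p) (mul q) (comul p q h) (comul p q g)
  coassoc : ∀ p q r (h : H (p * q * r)),
    (TensorProduct.assoc k (H p) (H q) (H r))
        ((TensorProduct.map (comul p q) LinearMap.id) (comul (p * q) r h))
      = (TensorProduct.map LinearMap.id (comul q r))
          (comul p (q * r) (castH k H (mul_assoc p q r) h))
  counit_left : ∀ p (h : H p),
    (TensorProduct.lid k (H p)) ((TensorProduct.map counit LinearMap.id)
      (comul 1 p (castH k H (one_mul p).symm h))) = h
  counit_right : ∀ p (h : H p),
    (TensorProduct.rid k (H p)) ((TensorProduct.map LinearMap.id counit)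
      (comul p 1 (castH k H (mul_one p).symm h))) = h
  eps_assoc : ∀ g h l : H 1, counit (mul 1 (mul 1 g h) l) = counit (mul 1 g (mul 1 h l))
  /-- `ε(ghl) = ε(gh₁)ε(h₂l)` -/
  eps_weak₁ : ∀ g h l : H 1, counit (mul 1 (mul 1 g h) l)
    = sc2 k (counit ∘ₗ mul 1 g) (counit ∘ₗ (mul 1).flip l)
        (comul 1 1 (castH k H (one_mul (1 : G)).symm h))
  /-- `ε(ghl) = ε(gh₂)ε(h₁l)` -/
  eps_weak₂ : ∀ g h l : H 1, counit (mul 1 (mul 1 g h) l)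
    = sc2 k (counit ∘ₗ (mul 1).flip l) (counit ∘ₗ mul 1 g)
        (comul 1 1 (castH k H (one_mul (1 : G)).symm h))
  /-- (3.1): `(Δ_{p,q} ⊗ id)Δ_{pq,r}(1) = (Δ_{p,q}(1) ⊗ 1_r)(1_p ⊗ Δ_{q,r}(1))` -/
  unit_weak₁ : ∀ p q r, (TensorProduct.map (comul p q) LinearMap.id)
      (comul (p * q) r (one (p * q * r)))
    = pair2 k (pair2 k (mul p) (mul q)) (mul r)
        ((comul p q (one (p * q))) ⊗ₜ[k] (one r))
        ((TensorProduct.assoc k (H p) (H q) (H r)).symm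
          ((one p) ⊗ₜ[k] (comul q r (one (q * r)))))
  /-- (3.2): `(Δ_{p,q} ⊗ id)Δ_{pq,r}(1) = (1_p ⊗ Δ_{q,r}(1))(Δ_{p,q}(1) ⊗ 1_r)` -/
  unit_weak₂ : ∀ p q r, (TensorProduct.map (comul p q) LinearMap.id)
      (comul (p * q) r (one (p * q * r)))
    = pair2 k (pair2 k (mul p) (mul q)) (mul r)
        ((TensorProduct.assoc k (H p) (H q) (H r)).symm
          ((one p) ⊗ₜ[k] (comul q r (one (q * r)))))
        ((comul p q (one (p * q))) ⊗ₜ[k] (one r))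
  /-- (3.4): `ε^t_p(h) = ε(1_{(1,e)}h) 1_{(2,p)}` -/
  εt_def : ∀ p (h : H 1), εt p h
    = sm2 k (counit ∘ₗ (mul 1).flip h) LinearMap.id (comul 1 p (one (1 * p)))
  /-- (3.5): `ε^s_p(h) = 1_{(1,p)} ε(h1_{(2,e)})` -/
  εs_def : ∀ p (h : H 1), εs p h
    = sm2 k (counit ∘ₗ mul 1 h) LinearMap.id
        ((TensorProduct.comm k (H p) (H 1)) (comul p 1 (one (p * 1))))
  /-- (3.11): `ε̃^t_p(h) = 1_{(1,p)} ε(1_{(2,e)}h)` -/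
  εt'_def : ∀ p (h : H 1), εt' p h
    = sm2 k (counit ∘ₗ (mul 1).flip h) LinearMap.id
        ((TensorProduct.comm k (H p) (H 1)) (comul p 1 (one (p * 1))))
  /-- (3.12): `ε̃^s_p(h) = ε(h1_{(1,e)}) 1_{(2,p)}` -/
  εs'_def : ∀ p (h : H 1), εs' p h
    = sm2 k (counit ∘ₗ mul 1 h) LinearMap.id (comul 1 p (one (1 * p)))
  /-- (3.6): `S = S * ε_t` -/
  S_conv_εt : ∀ p (h : H p),
    mu2 k (mul p⁻¹) (antS p) (εt p⁻¹) (comul p 1 (castH k H (mul_one p).symm h)) = antS p h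
  /-- (3.6): `S = ε_s * S` -/
  εs_conv_S : ∀ p (h : H p),
    mu2 k (mul p⁻¹) (εs p⁻¹) (antS p) (comul 1 p (castH k H (one_mul p).symm h)) = antS p h
  /-- (3.7): `S(h_{(1,p⁻¹)})(h_{(2,p)}g) = ε^s_p(h)g` -/
  antip₁ : ∀ p (h : H 1) (g : H p),
    mu2 k (mul p) ((castH k H (inv_inv p)) ∘ₗ antS p⁻¹) ((mul p).flip g)
        (comul p⁻¹ p (castH k H (inv_mul_cancel p).symm h))
      = mul p (εs p h) g
  /-- (3.8): `h_{(1,p)}(S(h_{(2,p⁻¹)})g) = ε^t_p(h)g` -/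
  antip₂ : ∀ p (h : H 1) (g : H p),
    mu2 k (mul p) LinearMap.id (((mul p).flip g) ∘ₗ (castH k H (inv_inv p)) ∘ₗ antS p⁻¹)
        (comul p p⁻¹ (castH k H (mul_inv_cancel p).symm h))
      = mul p (εt p h) g
  /-- (3.9): `(gh_{(1,p)})S(h_{(2,p⁻¹)}) = gε^t_p(h)` -/
  antip₃ : ∀ p (h : H 1) (g : H p),
    mu2 k (mul p) (mul p g) ((castH k H (inv_inv p)) ∘ₗ antS p⁻¹)
        (comul p p⁻¹ (castH k H (mul_inv_cancel p).symm h))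
      = mul p g (εt p h)
  /-- (3.10): `(gS(h_{(1,p⁻¹)}))h_{(2,p)} = gε^s_p(h)` -/
  antip₄ : ∀ p (h : H 1) (g : H p),
    mu2 k (mul p) ((mul p g) ∘ₗ (castH k H (inv_inv p)) ∘ₗ antS p⁻¹) LinearMap.id
        (comul p⁻¹ p (castH k H (inv_mul_cancel p).symm h))
      = mul p g (εs p h)


section Infra

variable {k : Type*} [Field k]

@[simp] lemma sc2_tmul {M N : Type*} [AddCommGroup M] [Module k M] [AddCommGroup N] [Module k N]
    (f : M →ₗ[k] k) (g : N →ₗ[k] k) (a : M) (b : N) :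
    sc2 k f g (a ⊗ₜ[k] b) = f a * g b := rfl

@[simp] lemma sm2_tmul {M N P : Type*} [AddCommGroup M] [Module k M] [AddCommGroup N] [Module k N]
    [AddCommGroup P] [Module k P] (f : M →ₗ[k] k) (g : N →ₗ[k] P) (a : M) (b : N) :
    sm2 k f g (a ⊗ₜ[k] b) = f a • g b := rfl

@[simp] lemma mu2_tmul {M N A B C : Type*} [AddCommGroup M] [Module k M] [AddCommGroup N]
    [Module k N] [AddCommGroup A] [Module k A] [AddCommGroup B] [Module k B] [AddCommGroup C]
    [Module k C] (m : A →ₗ[k] B →ₗ[k] C) (f : M →ₗ[k] A) (g : N →ₗ[k] B) (a : M) (b : N) :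
    mu2 k m f g (a ⊗ₜ[k] b) = m (f a) (g b) := rfl

@[simp] lemma pair2_tmul {A B C D E₁ E₂ : Type*} [AddCommGroup A] [Module k A] [AddCommGroup B]
    [Module k B] [AddCommGroup C] [Module k C] [AddCommGroup D] [Module k D]
    [AddCommGroup E₁] [Module k E₁] [AddCommGroup E₂] [Module k E₂]
    (f : A →ₗ[k] C →ₗ[k] E₁) (g : B →ₗ[k] D →ₗ[k] E₂) (a : A) (b : B) (c : C) (d : D) :
    pair2 k f g (a ⊗ₜ[k] b) (c ⊗ₜ[k] d) = (f a c) ⊗ₜ[k] (g b d) := rfl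

variable {G : Type*} [Group G] {H : G → Type*}
  [∀ p, AddCommGroup (H p)] [∀ p, Module k (H p)]

@[simp] lemma castH_rfl {p : G} : castH k H (rfl : p = p) = LinearMap.id := rfl

@[simp] lemma castH_self {p : G} (e : p = p) (x : H p) : castH k H e x = x := rfl

lemma castH_castH {p q r : G} (e1 : p = q) (e2 : q = r) (x : H p) :
    castH k H e2 (castH k H e1 x) = castH k H (e1.trans e2) x := by
  subst e1; subst e2; rfl

variable (A : GCWHQ k G H)

lemma castH_mul {p q : G} (e : p = q) (x y : H p) :
    A.mul q (castH k H e x) (castH k H e y) = castH k H e (A.mul p x y) := by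
  subst e; rfl

lemma castH_one {p q : G} (e : p = q) : castH k H e (A.one p) = A.one q := by
  subst e; rfl

lemma castH_comul {a b a' b' : G} (ea : a = a') (eb : b = b') (e : a * b = a' * b')
    (x : H (a * b)) :
    A.comul a' b' (castH k H e x)
      = TensorProduct.map (castH k H ea) (castH k H eb) (A.comul a b x) := by
  subst ea; subst eb;
  simp [castH_rfl, TensorProduct.map_id]

end Infra

section Proofs
set_option linter.unusedSectionVars false

variable {k : Type*} [Field k] {G : Type*} [Group G] {H : G → Type*}
  [∀ p, AddCommGroup (H p)] [∀ p, Module k (H p)] (A : GCWHQ k G H) (p : G)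

lemma counitL (x : H p) :
    sm2 k A.counit LinearMap.id (A.comul 1 p (castH k H (one_mul p).symm x)) = x := by
  have key : ∀ t : H 1 ⊗[k] H p, sm2 k A.counit LinearMap.id t
      = TensorProduct.lid k (H p) (TensorProduct.map A.counit LinearMap.id t) := by
    intro t
    induction t using TensorProduct.induction_on with
    | zero => simp
    | tmul a b => simp
    | add u v hu hv => simp [map_add, hu, hv]
  rw [key]; exact A.counit_left p x

lemma counitR (x : H p) :
    sm2 k A.counit LinearMap.id ((TensorProduct.comm k (H p) (H 1))
      (A.comul p 1 (castH k H (mul_one p).symm x))) = x := by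
  have key : ∀ t : H p ⊗[k] H 1, sm2 k A.counit LinearMap.id ((TensorProduct.comm k _ _) t)
      = TensorProduct.rid k (H p) (TensorProduct.map LinearMap.id A.counit t) := by
    intro t
    induction t using TensorProduct.induction_on with
    | zero => simp
    | tmul a b => simp
    | add u v hu hv => simp [map_add, hu, hv]
  rw [key]; exact A.counit_right p x

/-- `Σ ε_t(x₁) x₂ = x`. -/
lemma εt_conv_id (x : H p) :
    mu2 k (A.mul p) (A.εt p) LinearMap.id
      (A.comul 1 p (castH k H (one_mul p).symm x)) = x := by
  have key : ∀ t : H 1 ⊗[k] H p, mu2 k (A.mul p) (A.εt p) LinearMap.id t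
      = sm2 k A.counit LinearMap.id
          (pair2 k (A.mul 1) (A.mul p) (A.comul 1 p (A.one (1 * p))) t) := by
    intro t
    induction t using TensorProduct.induction_on with
    | zero => simp
    | tmul x y =>
      rw [mu2_tmul, A.εt_def]
      simp only [LinearMap.id_coe, id_eq]
      generalize A.comul 1 p (A.one (1 * p)) = r
      induction r using TensorProduct.induction_on with
      | zero => simp
      | tmul a b => simp
      | add u v hu hv => simp [map_add, hu, hv]
    | add u v hu hv => simp [map_add, hu, hv]
  rw [key, ← A.comul_mul, A.one_mul', counitL]

/-- `Σ x₁ ε_s(x₂) = x`. -/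
lemma id_conv_εs (x : H p) :
    mu2 k (A.mul p) LinearMap.id (A.εs p)
      (A.comul p 1 (castH k H (mul_one p).symm x)) = x := by
  have key : ∀ t : H p ⊗[k] H 1, mu2 k (A.mul p) LinearMap.id (A.εs p) t
      = sm2 k A.counit LinearMap.id ((TensorProduct.comm k (H p) (H 1))
          (pair2 k (A.mul p) (A.mul 1) t (A.comul p 1 (A.one (p * 1))))) := by
    intro t
    induction t using TensorProduct.induction_on with
    | zero => simp
    | tmul x w =>
      rw [mu2_tmul, A.εs_def]
      simp only [LinearMap.id_coe, id_eq]
      generalize A.comul p 1 (A.one (p * 1)) = r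
      induction r using TensorProduct.induction_on with
      | zero => simp
      | tmul a b => simp
      | add u v hu hv => simp [map_add, hu, hv]
    | add u v hu hv => simp [map_add, hu, hv]
  rw [key, ← A.comul_mul, A.mul_one', counitR]

end Proofs

section Proofs2
set_option linter.unusedSectionVars false

variable {k : Type*} [Field k] {G : Type*} [Group G] {H : G → Type*}
  [∀ p, AddCommGroup (H p)] [∀ p, Module k (H p)] (A : GCWHQ k G H) (p : G)

/-- `ε_t(uv) = Σ ε(u₂ v) ε_t(u₁)`. -/
lemma εt_mul (u v : H 1) :
    A.εt p (A.mul 1 u v)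
      = sm2 k (A.counit ∘ₗ (A.mul 1).flip v) (A.εt p)
          ((TensorProduct.comm k (H 1) (H 1))
            (A.comul 1 1 (castH k H (one_mul (1 : G)).symm u))) := by
  obtain ⟨S, hS⟩ := TensorProduct.exists_finset
    (A.comul 1 1 (castH k H (one_mul (1 : G)).symm u))
  have scalar_key : ∀ a : H 1, A.counit (A.mul 1 a (A.mul 1 u v))
      = ∑ i ∈ S, A.counit (A.mul 1 a i.1) * A.counit (A.mul 1 i.2 v) := by
    intro a
    have h1 := (A.eps_assoc a u v).symm
    have h2 := A.eps_weak₁ a u v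
    rw [hS, map_sum] at h2
    simp only [sc2_tmul, LinearMap.comp_apply, LinearMap.flip_apply] at h2
    rw [h1, h2]
  rw [A.εt_def, hS, map_sum, map_sum]
  simp only [sm2_tmul, TensorProduct.comm_tmul, LinearMap.comp_apply, LinearMap.flip_apply,
    A.εt_def]
  generalize A.comul 1 p (A.one (1 * p)) = r
  induction r using TensorProduct.induction_on with
  | zero => simp
  | tmul a b =>
    simp only [sm2_tmul, LinearMap.comp_apply, LinearMap.flip_apply, LinearMap.id_coe, id_eq]
    rw [scalar_key a, Finset.sum_smul]
    refine Finset.sum_congr rfl fun i _ => ?_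
    rw [smul_smul, mul_comm]
  | add w z hw hz =>
    simp only [map_add, Finset.smul_sum] at hw hz ⊢
    rw [hw, hz, ← Finset.sum_add_distrib]
    refine Finset.sum_congr rfl fun i _ => ?_
    rw [smul_add]

/-- `ε_s(uv) = Σ ε(u v₁) ε_s(v₂)`. -/
lemma εs_mul (u v : H 1) :
    A.εs p (A.mul 1 u v)
      = sm2 k (A.counit ∘ₗ (A.mul 1) u) (A.εs p)
          (A.comul 1 1 (castH k H (one_mul (1 : G)).symm v)) := by
  obtain ⟨S, hS⟩ := TensorProduct.exists_finset
    (A.comul 1 1 (castH k H (one_mul (1 : G)).symm v))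
  have scalar_key : ∀ c : H 1, A.counit (A.mul 1 (A.mul 1 u v) c)
      = ∑ i ∈ S, A.counit (A.mul 1 u i.1) * A.counit (A.mul 1 i.2 c) := by
    intro c
    have h2 := A.eps_weak₁ u v c
    rw [hS, map_sum] at h2
    simp only [sc2_tmul, LinearMap.comp_apply, LinearMap.flip_apply] at h2
    rw [h2]
  rw [A.εs_def, hS, map_sum]
  simp only [sm2_tmul, LinearMap.comp_apply, A.εs_def]
  generalize (TensorProduct.comm k (H p) (H 1)) (A.comul p 1 (A.one (p * 1))) = r
  induction r using TensorProduct.induction_on with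
  | zero => simp
  | tmul c b =>
    simp only [sm2_tmul, LinearMap.comp_apply, LinearMap.id_coe, id_eq]
    rw [scalar_key c, Finset.sum_smul]
    refine Finset.sum_congr rfl fun i _ => ?_
    rw [smul_smul]
  | add w z hw hz =>
    simp only [map_add] at hw hz ⊢
    rw [hw, hz, ← Finset.sum_add_distrib]
    refine Finset.sum_congr rfl fun i _ => ?_
    rw [smul_add]

end Proofs2

section Proofs3
set_option linter.unusedSectionVars false

variable {k : Type*} [Field k] {G : Type*} [Group G] {H : G → Type*}
  [∀ p, AddCommGroup (H p)] [∀ p, Module k (H p)] (A : GCWHQ k G H) (p : G)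

@[simp] lemma mu2_gzero {M N A' B C : Type*} [AddCommGroup M] [Module k M] [AddCommGroup N]
    [Module k N] [AddCommGroup A'] [Module k A'] [AddCommGroup B] [Module k B]
    [AddCommGroup C] [Module k C]
    (m : A' →ₗ[k] B →ₗ[k] C) (f : M →ₗ[k] A') (t : M ⊗[k] N) :
    mu2 k m f (0 : N →ₗ[k] B) t = 0 := by
  induction t using TensorProduct.induction_on with
  | zero => simp
  | tmul a b => simp
  | add u v hu hv => simp [map_add, hu, hv]

lemma mu2_gadd {M N A' B C : Type*} [AddCommGroup M] [Module k M] [AddCommGroup N]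
    [Module k N] [AddCommGroup A'] [Module k A'] [AddCommGroup B] [Module k B]
    [AddCommGroup C] [Module k C]
    (m : A' →ₗ[k] B →ₗ[k] C) (f : M →ₗ[k] A') (g₁ g₂ : N →ₗ[k] B) (t : M ⊗[k] N) :
    mu2 k m f (g₁ + g₂) t = mu2 k m f g₁ t + mu2 k m f g₂ t := by
  induction t using TensorProduct.induction_on with
  | zero => simp
  | tmul a b => simp
  | add u v hu hv => simp only [map_add, hu, hv]; abel

lemma map_map {M N M' N' M'' N'' : Type*} [AddCommGroup M] [Module k M] [AddCommGroup N]
    [Module k N] [AddCommGroup M'] [Module k M'] [AddCommGroup N'] [Module k N']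
    [AddCommGroup M''] [Module k M''] [AddCommGroup N''] [Module k N'']
    (f : M' →ₗ[k] M'') (g : N' →ₗ[k] N'') (φ : M →ₗ[k] M') (ψ : N →ₗ[k] N') (t : M ⊗[k] N) :
    TensorProduct.map f g (TensorProduct.map φ ψ t)
      = TensorProduct.map (f ∘ₗ φ) (g ∘ₗ ψ) t := by
  induction t using TensorProduct.induction_on with
  | zero => simp
  | tmul a b => simp
  | add u v hu hv => simp [map_add, hu, hv]

lemma mu2_map {M N M' N' A' B C : Type*} [AddCommGroup M] [Module k M] [AddCommGroup N]
    [Module k N] [AddCommGroup M'] [Module k M'] [AddCommGroup N'] [Module k N']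
    [AddCommGroup A'] [Module k A'] [AddCommGroup B] [Module k B] [AddCommGroup C] [Module k C]
    (m : A' →ₗ[k] B →ₗ[k] C) (f : M →ₗ[k] A') (g : N →ₗ[k] B)
    (φ : M' →ₗ[k] M) (ψ : N' →ₗ[k] N) (t : M' ⊗[k] N') :
    mu2 k m f g (TensorProduct.map φ ψ t) = mu2 k m (f ∘ₗ φ) (g ∘ₗ ψ) t := by
  induction t using TensorProduct.induction_on with
  | zero => simp
  | tmul a b => simp
  | add u v hu hv => simp [map_add, hu, hv]

/-- Proposition part (2): `ε_t(g₁)(g₂ h) = gh`. -/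
lemma goal2 (g h : H p) :
    mu2 k (A.mul p) (A.εt p) ((A.mul p).flip h)
      (A.comul 1 p (castH k H (one_mul p).symm g)) = A.mul p g h := by
  -- notation
  have E₀ : p = 1 * 1 * p := by simp
  have E₁ : p = 1 * (1 * p) := by simp
  -- step 1: gh = Σ ε_t((gh)₁) (gh)₂
  have S1 : A.mul p g h = mu2 k (A.mul p) (A.εt p) LinearMap.id
      (A.comul 1 p (castH k H (one_mul p).symm (A.mul p g h))) := (εt_conv_id A p _).symm
  -- step 2/3: Δ(gh) = Δ(g)Δ(h)
  have S2 : A.comul 1 p (castH k H (one_mul p).symm (A.mul p g h))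
      = pair2 k (A.mul 1) (A.mul p)
          (A.comul 1 p (castH k H (one_mul p).symm g))
          (A.comul 1 p (castH k H (one_mul p).symm h)) := by
    rw [← castH_mul A (one_mul p).symm g h, ← A.comul_mul]
  -- the inner contraction map
  set F : (H 1 ⊗[k] H p) →ₗ[k] H p :=
    (sm2 k A.counit LinearMap.id) ∘ₗ ((pair2 k (A.mul 1) (A.mul p)).flip
      (A.comul 1 p (castH k H (one_mul p).symm h))) with hF
  -- step 4: main rewriting using ε_t(uv) = Σ ε(u₂ v) ε_t(u₁)
  have key4 : ∀ (t s : H 1 ⊗[k] H p),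
      mu2 k (A.mul p) (A.εt p) LinearMap.id (pair2 k (A.mul 1) (A.mul p) t s)
      = mu2 k (A.mul p) (A.εt p)
          ((sm2 k A.counit LinearMap.id) ∘ₗ ((pair2 k (A.mul 1) (A.mul p)).flip s))
          ((TensorProduct.assoc k (H 1) (H 1) (H p))
            ((TensorProduct.map ((A.comul 1 1) ∘ₗ castH k H (one_mul (1 : G)).symm)
              LinearMap.id) t)) := by
    intro t s
    induction t using TensorProduct.induction_on with
    | zero => simp
    | tmul u x =>
      induction s using TensorProduct.induction_on with
      | zero => simp
      | tmul v y =>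
        simp only [pair2_tmul, mu2_tmul, TensorProduct.map_tmul, LinearMap.comp_apply,
          LinearMap.id_coe, id_eq]
        rw [εt_mul A p u v]
        generalize A.comul 1 1 (castH k H (one_mul (1 : G)).symm u) = r
        induction r using TensorProduct.induction_on with
        | zero => simp
        | tmul u₁ u₂ =>
          simp only [TensorProduct.comm_tmul, sm2_tmul, TensorProduct.assoc_tmul,
            mu2_tmul, LinearMap.flip_apply, LinearMap.comp_apply, pair2_tmul,
            LinearMap.id_coe, id_eq, map_smul, LinearMap.smul_apply]
        | add w z hw hz =>
          simp only [map_add, TensorProduct.add_tmul, LinearMap.add_apply, hw, hz]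
      | add w z hw hz =>
        simp only [map_add, LinearMap.comp_add, mu2_gadd, hw, hz]
    | add w z hw hz =>
      simp only [map_add, LinearMap.add_apply, LinearMap.map_add, hw, hz]
  -- coassociativity regrouping on g
  have h2 : A.comul (1 * 1) p (castH k H E₀ g)
      = TensorProduct.map (castH k H (one_mul (1 : G)).symm) LinearMap.id
          (A.comul 1 p (castH k H (one_mul p).symm g)) := by
    have h2' := castH_comul A (one_mul (1 : G)).symm (rfl : p = p)
      ((one_mul p).trans E₀) (castH k H (one_mul p).symm g)
    simp only [castH_rfl, castH_castH] at h2'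
    exact h2'
  have hco : (TensorProduct.assoc k (H 1) (H 1) (H p))
        ((TensorProduct.map ((A.comul 1 1) ∘ₗ castH k H (one_mul (1 : G)).symm)
          LinearMap.id) (A.comul 1 p (castH k H (one_mul p).symm g)))
      = TensorProduct.map LinearMap.id (A.comul 1 p)
          (A.comul 1 (1 * p) (castH k H E₁ g)) := by
    have hc := A.coassoc 1 1 p (castH k H E₀ g)
    rw [h2, map_map] at hc
    simp only [LinearMap.id_comp] at hc
    rw [castH_castH] at hc
    exact hc
  have h6 : A.comul 1 (1 * p) (castH k H E₁ g)
      = TensorProduct.map LinearMap.id (castH k H (one_mul p).symm)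
          (A.comul 1 p (castH k H (one_mul p).symm g)) := by
    have h6' := castH_comul A (rfl : (1 : G) = 1) (one_mul p).symm
      ((one_mul p).trans E₁) (castH k H (one_mul p).symm g)
    simp only [castH_rfl, castH_castH] at h6'
    exact h6'
  have key5 : ∀ w : H 1 ⊗[k] H (1 * p),
      mu2 k (A.mul p) (A.εt p) F ((TensorProduct.map LinearMap.id (A.comul 1 p)) w)
      = mu2 k (A.mul p) (A.εt p) ((A.mul p).flip h ∘ₗ castH k H (one_mul p)) w := by
    intro w
    induction w using TensorProduct.induction_on with
    | zero => simp
    | tmul u W =>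
      simp only [TensorProduct.map_tmul, mu2_tmul, LinearMap.id_coe, id_eq,
        LinearMap.comp_apply, LinearMap.flip_apply]
      congr 1
      rw [hF]
      simp only [LinearMap.comp_apply, LinearMap.flip_apply]
      rw [← A.comul_mul 1 p W (castH k H (one_mul p).symm h)]
      have e2 : A.mul (1 * p) W (castH k H (one_mul p).symm h)
          = castH k H (one_mul p).symm (A.mul p (castH k H (one_mul p) W) h) := by
        rw [← castH_mul A (one_mul p).symm (castH k H (one_mul p) W) h, castH_castH]
        rfl
      rw [e2, counitL]
    | add u v hu hv => simp only [map_add, hu, hv]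
  have hg : (((A.mul p).flip h ∘ₗ castH k H (one_mul p)) ∘ₗ castH k H (one_mul p).symm)
      = (A.mul p).flip h := by
    ext x
    simp [LinearMap.comp_apply, castH_castH]
  refine Eq.symm ?_
  calc A.mul p g h
      = mu2 k (A.mul p) (A.εt p) LinearMap.id
          (A.comul 1 p (castH k H (one_mul p).symm (A.mul p g h))) := S1
    _ = mu2 k (A.mul p) (A.εt p) LinearMap.id
          (pair2 k (A.mul 1) (A.mul p)
            (A.comul 1 p (castH k H (one_mul p).symm g))
            (A.comul 1 p (castH k H (one_mul p).symm h))) := by rw [S2]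
    _ = mu2 k (A.mul p) (A.εt p) F
          ((TensorProduct.assoc k (H 1) (H 1) (H p))
            ((TensorProduct.map ((A.comul 1 1) ∘ₗ castH k H (one_mul (1 : G)).symm)
              LinearMap.id) (A.comul 1 p (castH k H (one_mul p).symm g)))) := key4 _ _
    _ = mu2 k (A.mul p) (A.εt p) F
          ((TensorProduct.map LinearMap.id (A.comul 1 p))
            (A.comul 1 (1 * p) (castH k H E₁ g))) := by rw [hco]
    _ = mu2 k (A.mul p) (A.εt p) ((A.mul p).flip h ∘ₗ castH k H (one_mul p))
          (A.comul 1 (1 * p) (castH k H E₁ g)) := key5 _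
    _ = mu2 k (A.mul p) (A.εt p ∘ₗ LinearMap.id)
          (((A.mul p).flip h ∘ₗ castH k H (one_mul p)) ∘ₗ castH k H (one_mul p).symm)
          (A.comul 1 p (castH k H (one_mul p).symm g)) := by rw [h6, mu2_map]
    _ = mu2 k (A.mul p) (A.εt p) ((A.mul p).flip h)
          (A.comul 1 p (castH k H (one_mul p).symm g)) := by
            rw [hg, LinearMap.comp_id]

end Proofs3

section Proofs4
set_option linter.unusedSectionVars false

variable {k : Type*} [Field k] {G : Type*} [Group G] {H : G → Type*}
  [∀ p, AddCommGroup (H p)] [∀ p, Module k (H p)] (A : GCWHQ k G H) (p : G)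

@[simp] lemma mu2_fzero {M N A' B C : Type*} [AddCommGroup M] [Module k M] [AddCommGroup N]
    [Module k N] [AddCommGroup A'] [Module k A'] [AddCommGroup B] [Module k B]
    [AddCommGroup C] [Module k C]
    (m : A' →ₗ[k] B →ₗ[k] C) (g : N →ₗ[k] B) (t : M ⊗[k] N) :
    mu2 k m (0 : M →ₗ[k] A') g t = 0 := by
  induction t using TensorProduct.induction_on with
  | zero => simp
  | tmul a b => simp
  | add u v hu hv => simp [map_add, hu, hv]

lemma mu2_fadd {M N A' B C : Type*} [AddCommGroup M] [Module k M] [AddCommGroup N]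
    [Module k N] [AddCommGroup A'] [Module k A'] [AddCommGroup B] [Module k B]
    [AddCommGroup C] [Module k C]
    (m : A' →ₗ[k] B →ₗ[k] C) (f₁ f₂ : M →ₗ[k] A') (g : N →ₗ[k] B) (t : M ⊗[k] N) :
    mu2 k m (f₁ + f₂) g t = mu2 k m f₁ g t + mu2 k m f₂ g t := by
  induction t using TensorProduct.induction_on with
  | zero => simp
  | tmul a b => simp
  | add u v hu hv => simp only [map_add, hu, hv]; abel

/-- Proposition part (4): `(g h₁) ε_s(h₂) = gh`. -/
lemma goal4 (g h : H p) :
    mu2 k (A.mul p) (A.mul p g) (A.εs p)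
      (A.comul p 1 (castH k H (mul_one p).symm h)) = A.mul p g h := by
  have E₀ : p = p * 1 * 1 := by simp
  have E₁ : p = p * (1 * 1) := by simp
  set CR : H p ⊗[k] H 1 →ₗ[k] H p :=
    (sm2 k A.counit LinearMap.id) ∘ₗ (TensorProduct.comm k (H p) (H 1)).toLinearMap with hCR
  have hCRval : ∀ x : H p, CR (A.comul p 1 (castH k H (mul_one p).symm x)) = x := by
    intro x
    exact counitR A p x
  have S1 : A.mul p g h = mu2 k (A.mul p) LinearMap.id (A.εs p)
      (A.comul p 1 (castH k H (mul_one p).symm (A.mul p g h))) := (id_conv_εs A p _).symm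
  have S2 : A.comul p 1 (castH k H (mul_one p).symm (A.mul p g h))
      = pair2 k (A.mul p) (A.mul 1)
          (A.comul p 1 (castH k H (mul_one p).symm g))
          (A.comul p 1 (castH k H (mul_one p).symm h)) := by
    rw [← castH_mul A (mul_one p).symm g h, ← A.comul_mul]
  have key4 : ∀ (t s : H p ⊗[k] H 1),
      mu2 k (A.mul p) LinearMap.id (A.εs p) (pair2 k (A.mul p) (A.mul 1) t s)
      = mu2 k (A.mul p) (CR ∘ₗ ((pair2 k (A.mul p) (A.mul 1)) t)) (A.εs p)
          ((TensorProduct.assoc k (H p) (H 1) (H 1)).symm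
            ((TensorProduct.map LinearMap.id
              ((A.comul 1 1) ∘ₗ castH k H (one_mul (1 : G)).symm)) s)) := by
    intro t s
    induction t using TensorProduct.induction_on with
    | zero =>
      simp only [map_zero, LinearMap.zero_apply, LinearMap.comp_zero, mu2_fzero]
    | tmul x u =>
      induction s using TensorProduct.induction_on with
      | zero => simp
      | tmul y v =>
        simp only [pair2_tmul, mu2_tmul, TensorProduct.map_tmul, LinearMap.comp_apply,
          LinearMap.id_coe, id_eq]
        rw [εs_mul A p u v]
        generalize A.comul 1 1 (castH k H (one_mul (1 : G)).symm v) = r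
        induction r using TensorProduct.induction_on with
        | zero => simp
        | tmul v₁ v₂ =>
          simp only [sm2_tmul, TensorProduct.assoc_symm_tmul, mu2_tmul,
            LinearMap.comp_apply, pair2_tmul, LinearMap.id_coe, id_eq, map_smul,
            LinearMap.smul_apply, LinearEquiv.coe_coe, TensorProduct.comm_tmul, hCR]
        | add w z hw hz =>
          simp only [map_add, TensorProduct.tmul_add, LinearMap.add_apply, hw, hz]
      | add w z hw hz =>
        simp only [map_add, hw, hz]
    | add w z hw hz =>
      simp only [map_add, LinearMap.add_apply, LinearMap.comp_add, mu2_fadd, hw, hz]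
  -- coassociativity regrouping on h
  have h2 : A.comul p (1 * 1) (castH k H E₁ h)
      = TensorProduct.map LinearMap.id (castH k H (one_mul (1 : G)).symm)
          (A.comul p 1 (castH k H (mul_one p).symm h)) := by
    have h2' := castH_comul A (rfl : p = p) (one_mul (1 : G)).symm
      ((mul_one p).trans E₁) (castH k H (mul_one p).symm h)
    simp only [castH_rfl, castH_castH] at h2'
    exact h2'
  have hco : (TensorProduct.assoc k (H p) (H 1) (H 1)).symm
        ((TensorProduct.map LinearMap.id
          ((A.comul 1 1) ∘ₗ castH k H (one_mul (1 : G)).symm))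
          (A.comul p 1 (castH k H (mul_one p).symm h)))
      = TensorProduct.map (A.comul p 1) LinearMap.id
          (A.comul (p * 1) 1 (castH k H E₀ h)) := by
    have hc := A.coassoc p 1 1 (castH k H E₀ h)
    rw [castH_castH] at hc
    have hc2 : (TensorProduct.map LinearMap.id (A.comul 1 1))
          ((A.comul p (1 * 1)) (castH k H E₁ h))
        = (TensorProduct.assoc k (H p) (H 1) (H 1))
            ((TensorProduct.map (A.comul p 1) LinearMap.id)
              (A.comul (p * 1) 1 (castH k H E₀ h))) := hc.symm
    rw [h2, map_map] at hc2
    simp only [LinearMap.comp_id] at hc2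
    rw [hc2, LinearEquiv.symm_apply_apply]
  have hfun : (CR ∘ₗ ((pair2 k (A.mul p) (A.mul 1))
        (A.comul p 1 (castH k H (mul_one p).symm g)))) ∘ₗ (A.comul p 1)
      = (A.mul p g) ∘ₗ castH k H (mul_one p) := by
    ext W
    simp only [LinearMap.comp_apply]
    rw [← A.comul_mul p 1 (castH k H (mul_one p).symm g) W]
    have e2 : A.mul (p * 1) (castH k H (mul_one p).symm g) W
        = castH k H (mul_one p).symm (A.mul p g (castH k H (mul_one p) W)) := by
      rw [← castH_mul A (mul_one p).symm g (castH k H (mul_one p) W), castH_castH]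
      rfl
    rw [e2, hCRval]
  have h6 : A.comul (p * 1) 1 (castH k H E₀ h)
      = TensorProduct.map (castH k H (mul_one p).symm) LinearMap.id
          (A.comul p 1 (castH k H (mul_one p).symm h)) := by
    have h6' := castH_comul A (mul_one p).symm (rfl : (1 : G) = 1)
      ((mul_one p).trans E₀) (castH k H (mul_one p).symm h)
    simp only [castH_rfl, castH_castH] at h6'
    exact h6'
  have hg : ((A.mul p g) ∘ₗ castH k H (mul_one p)) ∘ₗ castH k H (mul_one p).symm
      = A.mul p g := by
    ext x
    simp [LinearMap.comp_apply, castH_castH]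
  refine Eq.symm ?_
  calc A.mul p g h
      = mu2 k (A.mul p) LinearMap.id (A.εs p)
          (A.comul p 1 (castH k H (mul_one p).symm (A.mul p g h))) := S1
    _ = mu2 k (A.mul p) LinearMap.id (A.εs p)
          (pair2 k (A.mul p) (A.mul 1)
            (A.comul p 1 (castH k H (mul_one p).symm g))
            (A.comul p 1 (castH k H (mul_one p).symm h))) := by rw [S2]
    _ = mu2 k (A.mul p) (CR ∘ₗ ((pair2 k (A.mul p) (A.mul 1))
            (A.comul p 1 (castH k H (mul_one p).symm g)))) (A.εs p)
          ((TensorProduct.assoc k (H p) (H 1) (H 1)).symm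
            ((TensorProduct.map LinearMap.id
              ((A.comul 1 1) ∘ₗ castH k H (one_mul (1 : G)).symm))
              (A.comul p 1 (castH k H (mul_one p).symm h)))) := key4 _ _
    _ = mu2 k (A.mul p) (CR ∘ₗ ((pair2 k (A.mul p) (A.mul 1))
            (A.comul p 1 (castH k H (mul_one p).symm g)))) (A.εs p)
          (TensorProduct.map (A.comul p 1) LinearMap.id
            (A.comul (p * 1) 1 (castH k H E₀ h))) := by rw [hco]
    _ = mu2 k (A.mul p) ((CR ∘ₗ ((pair2 k (A.mul p) (A.mul 1))
            (A.comul p 1 (castH k H (mul_one p).symm g)))) ∘ₗ (A.comul p 1))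
          (A.εs p ∘ₗ LinearMap.id)
          (A.comul (p * 1) 1 (castH k H E₀ h)) := by rw [mu2_map]
    _ = mu2 k (A.mul p) ((A.mul p g) ∘ₗ castH k H (mul_one p)) (A.εs p)
          (A.comul (p * 1) 1 (castH k H E₀ h)) := by
            rw [hfun, LinearMap.comp_id]
    _ = mu2 k (A.mul p) (((A.mul p g) ∘ₗ castH k H (mul_one p)) ∘ₗ castH k H (mul_one p).symm)
          (A.εs p ∘ₗ LinearMap.id)
          (A.comul p 1 (castH k H (mul_one p).symm h)) := by rw [h6, mu2_map]
    _ = mu2 k (A.mul p) (A.mul p g) (A.εs p)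
          (A.comul p 1 (castH k H (mul_one p).symm h)) := by
            rw [hg, LinearMap.comp_id]

end Proofs4

section Proofs5
set_option linter.unusedSectionVars false

variable {k : Type*} [Field k] {G : Type*} [Group G] {H : G → Type*}
  [∀ p, AddCommGroup (H p)] [∀ p, Module k (H p)] (A : GCWHQ k G H) (p : G)

/-- Proposition part (3): `g₁ (ε_s(g₂) h) = gh`. -/
lemma goal3 (g h : H p) :
    mu2 k (A.mul p) LinearMap.id (((A.mul p).flip h) ∘ₗ A.εs p)
      (A.comul p 1 (castH k H (mul_one p).symm g)) = A.mul p g h := by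
  have EA : p = p * p⁻¹ * p := by simp
  have EB : p = p * (p⁻¹ * p) := by simp
  set S₁ : H p⁻¹ →ₗ[k] H p := (castH k H (inv_inv p)) ∘ₗ A.antS p⁻¹ with hS₁
  set F₅ : H p⁻¹ ⊗[k] H p →ₗ[k] H p := mu2 k (A.mul p) S₁ ((A.mul p).flip h) with hF₅
  have key1 : ∀ t : H p ⊗[k] H 1,
      mu2 k (A.mul p) LinearMap.id (((A.mul p).flip h) ∘ₗ A.εs p) t
      = mu2 k (A.mul p) LinearMap.id F₅
          ((TensorProduct.map LinearMap.id
            ((A.comul p⁻¹ p) ∘ₗ castH k H (inv_mul_cancel p).symm)) t) := by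
    intro t
    induction t using TensorProduct.induction_on with
    | zero => simp
    | tmul a w =>
      simp only [mu2_tmul, TensorProduct.map_tmul, LinearMap.comp_apply,
        LinearMap.id_coe, id_eq, LinearMap.flip_apply]
      congr 1
      exact (A.antip₁ p w h).symm
    | add u v hu hv => simp only [map_add, hu, hv]
  -- coassociativity regrouping on g
  have h2 : A.comul p (p⁻¹ * p) (castH k H EB g)
      = TensorProduct.map LinearMap.id (castH k H (inv_mul_cancel p).symm)
          (A.comul p 1 (castH k H (mul_one p).symm g)) := by
    have h2' := castH_comul A (rfl : p = p) (inv_mul_cancel p).symm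
      ((mul_one p).trans EB) (castH k H (mul_one p).symm g)
    simp only [castH_rfl, castH_castH] at h2'
    exact h2'
  have hco : (TensorProduct.map LinearMap.id
        ((A.comul p⁻¹ p) ∘ₗ castH k H (inv_mul_cancel p).symm))
        (A.comul p 1 (castH k H (mul_one p).symm g))
      = (TensorProduct.assoc k (H p) (H p⁻¹) (H p))
          ((TensorProduct.map (A.comul p p⁻¹) LinearMap.id)
            (A.comul (p * p⁻¹) p (castH k H EA g))) := by
    have hc := A.coassoc p p⁻¹ p (castH k H EA g)
    rw [castH_castH] at hc
    have hc2 : (TensorProduct.map LinearMap.id (A.comul p⁻¹ p))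
          ((A.comul p (p⁻¹ * p)) (castH k H EB g))
        = (TensorProduct.assoc k (H p) (H p⁻¹) (H p))
            ((TensorProduct.map (A.comul p p⁻¹) LinearMap.id)
              (A.comul (p * p⁻¹) p (castH k H EA g))) := hc.symm
    rw [h2, map_map] at hc2
    simp only [LinearMap.comp_id] at hc2
    exact hc2
  have key5 : ∀ u : H (p * p⁻¹) ⊗[k] H p,
      mu2 k (A.mul p) LinearMap.id F₅
        ((TensorProduct.assoc k (H p) (H p⁻¹) (H p))
          ((TensorProduct.map (A.comul p p⁻¹) LinearMap.id) u))
      = mu2 k (A.mul p) ((A.εt p) ∘ₗ castH k H (mul_inv_cancel p)) ((A.mul p).flip h) u := by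
    intro u
    induction u using TensorProduct.induction_on with
    | zero => simp
    | tmul B y =>
      have inner : ∀ r : H p ⊗[k] H p⁻¹,
          mu2 k (A.mul p) LinearMap.id F₅
            ((TensorProduct.assoc k (H p) (H p⁻¹) (H p)) (r ⊗ₜ[k] y))
          = mu2 k (A.mul p) LinearMap.id
              (((A.mul p).flip (A.mul p y h)) ∘ₗ S₁) r := by
        intro r
        induction r using TensorProduct.induction_on with
        | zero => simp
        | tmul a b =>
          simp only [TensorProduct.assoc_tmul, mu2_tmul, hF₅, LinearMap.comp_apply,
            LinearMap.id_coe, id_eq, LinearMap.flip_apply]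
        | add u' v' hu hv =>
          simp only [TensorProduct.add_tmul, map_add, hu, hv]
      simp only [TensorProduct.map_tmul, LinearMap.id_coe, id_eq]
      rw [inner]
      have ha := A.antip₂ p (castH k H (mul_inv_cancel p) B) (A.mul p y h)
      simp only [castH_castH, castH_self] at ha
      simp only [mu2_tmul, LinearMap.comp_apply, LinearMap.flip_apply]
      exact ha
    | add u' v' hu hv => simp only [map_add, hu, hv]
  have h6 : A.comul (p * p⁻¹) p (castH k H EA g)
      = TensorProduct.map (castH k H (mul_inv_cancel p).symm) LinearMap.id
          (A.comul 1 p (castH k H (one_mul p).symm g)) := by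
    have h6' := castH_comul A (mul_inv_cancel p).symm (rfl : p = p)
      ((one_mul p).trans EA) (castH k H (one_mul p).symm g)
    simp only [castH_rfl, castH_castH] at h6'
    exact h6'
  have hg : ((A.εt p) ∘ₗ castH k H (mul_inv_cancel p)) ∘ₗ castH k H (mul_inv_cancel p).symm
      = A.εt p := by
    ext x
    simp [LinearMap.comp_apply, castH_castH]
  calc mu2 k (A.mul p) LinearMap.id (((A.mul p).flip h) ∘ₗ A.εs p)
        (A.comul p 1 (castH k H (mul_one p).symm g))
      = mu2 k (A.mul p) LinearMap.id F₅
          ((TensorProduct.map LinearMap.id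
            ((A.comul p⁻¹ p) ∘ₗ castH k H (inv_mul_cancel p).symm))
            (A.comul p 1 (castH k H (mul_one p).symm g))) := key1 _
    _ = mu2 k (A.mul p) LinearMap.id F₅
          ((TensorProduct.assoc k (H p) (H p⁻¹) (H p))
            ((TensorProduct.map (A.comul p p⁻¹) LinearMap.id)
              (A.comul (p * p⁻¹) p (castH k H EA g)))) := by rw [hco]
    _ = mu2 k (A.mul p) ((A.εt p) ∘ₗ castH k H (mul_inv_cancel p)) ((A.mul p).flip h)
          (A.comul (p * p⁻¹) p (castH k H EA g)) := key5 _
    _ = mu2 k (A.mul p)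
          (((A.εt p) ∘ₗ castH k H (mul_inv_cancel p)) ∘ₗ castH k H (mul_inv_cancel p).symm)
          (((A.mul p).flip h) ∘ₗ LinearMap.id)
          (A.comul 1 p (castH k H (one_mul p).symm g)) := by rw [h6, mu2_map]
    _ = mu2 k (A.mul p) (A.εt p) ((A.mul p).flip h)
          (A.comul 1 p (castH k H (one_mul p).symm g)) := by
            rw [hg, LinearMap.comp_id]
    _ = A.mul p g h := goal2 A p g h

/-- Proposition part (1): `(g ε_t(h₁)) h₂ = gh`. -/
lemma goal1 (g h : H p) :
    mu2 k (A.mul p) ((A.mul p g) ∘ₗ A.εt p) LinearMap.id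
      (A.comul 1 p (castH k H (one_mul p).symm h)) = A.mul p g h := by
  have EA : p = p * p⁻¹ * p := by simp
  have EB : p = p * (p⁻¹ * p) := by simp
  set S₁ : H p⁻¹ →ₗ[k] H p := (castH k H (inv_inv p)) ∘ₗ A.antS p⁻¹ with hS₁
  set F₆ : H p ⊗[k] H p⁻¹ →ₗ[k] H p := mu2 k (A.mul p) (A.mul p g) S₁ with hF₆
  have key1 : ∀ t : H 1 ⊗[k] H p,
      mu2 k (A.mul p) ((A.mul p g) ∘ₗ A.εt p) LinearMap.id t
      = mu2 k (A.mul p) F₆ LinearMap.id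
          ((TensorProduct.map
            ((A.comul p p⁻¹) ∘ₗ castH k H (mul_inv_cancel p).symm) LinearMap.id) t) := by
    intro t
    induction t using TensorProduct.induction_on with
    | zero => simp
    | tmul x y =>
      simp only [mu2_tmul, TensorProduct.map_tmul, LinearMap.comp_apply,
        LinearMap.id_coe, id_eq]
      exact congrArg (fun z => A.mul p z y) ((A.antip₃ p x g).symm)
    | add u v hu hv => simp only [map_add, hu, hv]
  have h2 : A.comul (p * p⁻¹) p (castH k H EA h)
      = TensorProduct.map (castH k H (mul_inv_cancel p).symm) LinearMap.id
          (A.comul 1 p (castH k H (one_mul p).symm h)) := by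
    have h2' := castH_comul A (mul_inv_cancel p).symm (rfl : p = p)
      ((one_mul p).trans EA) (castH k H (one_mul p).symm h)
    simp only [castH_rfl, castH_castH] at h2'
    exact h2'
  have hco : (TensorProduct.map
        ((A.comul p p⁻¹) ∘ₗ castH k H (mul_inv_cancel p).symm) LinearMap.id)
        (A.comul 1 p (castH k H (one_mul p).symm h))
      = (TensorProduct.assoc k (H p) (H p⁻¹) (H p)).symm
          ((TensorProduct.map LinearMap.id (A.comul p⁻¹ p))
            (A.comul p (p⁻¹ * p) (castH k H EB h))) := by
    have hc := A.coassoc p p⁻¹ p (castH k H EA h)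
    rw [castH_castH] at hc
    have hc2 : (TensorProduct.assoc k (H p) (H p⁻¹) (H p))
          ((TensorProduct.map (A.comul p p⁻¹) LinearMap.id)
            (A.comul (p * p⁻¹) p (castH k H EA h)))
        = (TensorProduct.map LinearMap.id (A.comul p⁻¹ p))
            (A.comul p (p⁻¹ * p) (castH k H EB h)) := hc
    rw [h2, map_map] at hc2
    simp only [LinearMap.comp_id] at hc2
    rw [← hc2, LinearEquiv.symm_apply_apply]
  have key5 : ∀ u : H p ⊗[k] H (p⁻¹ * p),
      mu2 k (A.mul p) F₆ LinearMap.id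
        ((TensorProduct.assoc k (H p) (H p⁻¹) (H p)).symm
          ((TensorProduct.map LinearMap.id (A.comul p⁻¹ p)) u))
      = mu2 k (A.mul p) (A.mul p g)
          ((A.εs p) ∘ₗ castH k H (inv_mul_cancel p)) u := by
    intro u
    induction u using TensorProduct.induction_on with
    | zero => simp
    | tmul a B =>
      have inner : ∀ r : H p⁻¹ ⊗[k] H p,
          mu2 k (A.mul p) F₆ LinearMap.id
            ((TensorProduct.assoc k (H p) (H p⁻¹) (H p)).symm (a ⊗ₜ[k] r))
          = mu2 k (A.mul p) ((A.mul p (A.mul p g a)) ∘ₗ S₁) LinearMap.id r := by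
        intro r
        induction r using TensorProduct.induction_on with
        | zero => simp
        | tmul b y =>
          simp only [TensorProduct.assoc_symm_tmul, mu2_tmul, hF₆, LinearMap.comp_apply,
            LinearMap.id_coe, id_eq]
        | add u' v' hu hv =>
          simp only [TensorProduct.tmul_add, map_add, hu, hv]
      simp only [TensorProduct.map_tmul, LinearMap.id_coe, id_eq]
      rw [inner]
      have ha := A.antip₄ p (castH k H (inv_mul_cancel p) B) (A.mul p g a)
      simp only [castH_castH, castH_self] at ha
      simp only [mu2_tmul, LinearMap.comp_apply, LinearMap.flip_apply]
      exact ha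
    | add u' v' hu hv => simp only [map_add, hu, hv]
  have h6 : A.comul p (p⁻¹ * p) (castH k H EB h)
      = TensorProduct.map LinearMap.id (castH k H (inv_mul_cancel p).symm)
          (A.comul p 1 (castH k H (mul_one p).symm h)) := by
    have h6' := castH_comul A (rfl : p = p) (inv_mul_cancel p).symm
      ((mul_one p).trans EB) (castH k H (mul_one p).symm h)
    simp only [castH_rfl, castH_castH] at h6'
    exact h6'
  have hg : ((A.εs p) ∘ₗ castH k H (inv_mul_cancel p)) ∘ₗ castH k H (inv_mul_cancel p).symm
      = A.εs p := by
    ext x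
    simp [LinearMap.comp_apply, castH_castH]
  calc mu2 k (A.mul p) ((A.mul p g) ∘ₗ A.εt p) LinearMap.id
        (A.comul 1 p (castH k H (one_mul p).symm h))
      = mu2 k (A.mul p) F₆ LinearMap.id
          ((TensorProduct.map
            ((A.comul p p⁻¹) ∘ₗ castH k H (mul_inv_cancel p).symm) LinearMap.id)
            (A.comul 1 p (castH k H (one_mul p).symm h))) := key1 _
    _ = mu2 k (A.mul p) F₆ LinearMap.id
          ((TensorProduct.assoc k (H p) (H p⁻¹) (H p)).symm
            ((TensorProduct.map LinearMap.id (A.comul p⁻¹ p))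
              (A.comul p (p⁻¹ * p) (castH k H EB h)))) := by rw [hco]
    _ = mu2 k (A.mul p) (A.mul p g) ((A.εs p) ∘ₗ castH k H (inv_mul_cancel p))
          (A.comul p (p⁻¹ * p) (castH k H EB h)) := key5 _
    _ = mu2 k (A.mul p) ((A.mul p g) ∘ₗ LinearMap.id)
          (((A.εs p) ∘ₗ castH k H (inv_mul_cancel p)) ∘ₗ castH k H (inv_mul_cancel p).symm)
          (A.comul p 1 (castH k H (mul_one p).symm h)) := by rw [h6, mu2_map]
    _ = mu2 k (A.mul p) (A.mul p g) (A.εs p)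
          (A.comul p 1 (castH k H (mul_one p).symm h)) := by
            rw [hg, LinearMap.comp_id]
    _ = A.mul p g h := goal4 A p g h

end Proofs5
end WHQPaper

open WHQPaper in
/-- In a group-cograded weak Hopf quasigroup, for all `p ∈ G` and `h, g ∈ H_p`:
`gh = (gε^t_p(h_{(1,e)}))h_{(2,p)} = ε^t_p(g_{(1,e)})(g_{(2,p)}h)
    = g_{(1,p)}(ε^s_p(g_{(2,e)})h) = (gh_{(1,p)})ε^s_p(h_{(2,e)})`. -/
theorem mul_counital_decompositions {k G : Type*} [Field k] [Group G] {H : G → Type*}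
    [∀ p, AddCommGroup (H p)] [∀ p, Module k (H p)] (A : GCWHQ k G H)
    (p : G) (h g : H p) :
    mu2 k (A.mul p) ((A.mul p g) ∘ₗ A.εt p) LinearMap.id
        (A.comul 1 p (castH k H (one_mul p).symm h)) = A.mul p g h ∧
    mu2 k (A.mul p) (A.εt p) ((A.mul p).flip h)
        (A.comul 1 p (castH k H (one_mul p).symm g)) = A.mul p g h ∧
    mu2 k (A.mul p) LinearMap.id (((A.mul p).flip h) ∘ₗ A.εs p)
        (A.comul p 1 (castH k H (mul_one p).symm g)) = A.mul p g h ∧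
    mu2 k (A.mul p) (A.mul p g) (A.εs p)
        (A.comul p 1 (castH k H (mul_one p).symm h)) = A.mul p g h :=
  ⟨goal1 A p g h, goal2 A p g h, goal3 A p g h, goal4 A p g h⟩
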